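/- For 0 ≤ q < 1 and fixed 0 < p < 1 with q ≤ p, the function C ↦ Δ(C, q, p) = -ln(1 - p(1 - e^{-C})) - C·q is concave in C on (0, ∞), and attains its maximum at C₀ = -ln((q p - p)/(q p - q)) = ln(p(1-q)/(q(1-p))) when 0 < q < p, with Δ(C₀, q, p) = kl(q‖p). -/

import Mathlib

noncomputable def klBin (q p : ℝ) : ℝ :=
  q * Real.log (q / p) + (1 - q) * Real.log ((1 - q) / (1 - p))

noncomputable def Δ (C q p : ℝ) : ℝ :=
  -Real.log (1 - p * (1 - Real.exp (-C))) - C * q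

/-- For `0 ≤ q < 1`, `0 < p < 1`, `q ≤ p`: `C ↦ Δ(C,q,p)` is concave on `(0,∞)`,
and when `0 < q < p` it attains its maximum on `(0,∞)` at
`C₀ = ln(p(1-q)/(q(1-p)))`, with value `kl(q‖p)`. -/
theorem statement3 (q p : ℝ) (hq0 : 0 ≤ q) (hq1 : q < 1)
    (hp0 : 0 < p) (hp1 : p < 1) (hqp : q ≤ p) :
    ConcaveOn ℝ (Set.Ioi (0 : ℝ)) (fun C => Δ C q p) ∧
    (0 < q → q < p →
      IsMaxOn (fun C => Δ C q p) (Set.Ioi (0 : ℝ))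
          (Real.log (p * (1 - q) / (q * (1 - p)))) ∧
        Δ (Real.log (p * (1 - q) / (q * (1 - p)))) q p = klBin q p) := by
  have hp1' : 0 < 1 - p := by linarith
  have hq1' : 0 < 1 - q := by linarith
  have hg : ∀ C : ℝ, 0 < 1 - p * (1 - Real.exp (-C)) := by
    intro C
    nlinarith [Real.exp_pos (-C)]
  set d : ℝ → ℝ := fun C => p * Real.exp (-C) / (1 - p * (1 - Real.exp (-C))) - q with hd
  have hderiv : ∀ C : ℝ, HasDerivAt (fun C => Δ C q p) (d C) C := by
    intro C
    have he : HasDerivAt (fun x : ℝ => Real.exp (-x)) (Real.exp (-C) * (-1)) C :=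
      (Real.hasDerivAt_exp (-C)).comp C (hasDerivAt_neg C)
    have hgd : HasDerivAt (fun x : ℝ => 1 - p * (1 - Real.exp (-x)))
        (-(p * (-(Real.exp (-C) * (-1))))) C := ((he.const_sub 1).const_mul p).const_sub 1
    have hl : HasDerivAt (fun x : ℝ => Real.log (1 - p * (1 - Real.exp (-x))))
        (-(p * (-(Real.exp (-C) * (-1)))) / (1 - p * (1 - Real.exp (-C)))) C :=
      hgd.log (ne_of_gt (hg C))
    have := hl.neg.sub ((hasDerivAt_id C).mul_const q)
    convert this using 1
    show p * Real.exp (-C) / (1 - p * (1 - Real.exp (-C))) - q = _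
    ring
    all_goals rfl
  have hdle : ∀ a b : ℝ, a ≤ b → d b ≤ d a := by
    intro a b hab
    simp only [hd, sub_le_sub_iff_right]
    rw [div_le_div_iff₀ (hg b) (hg a)]
    have h1 : Real.exp (-b) ≤ Real.exp (-a) := Real.exp_le_exp.2 (by linarith)
    nlinarith [Real.exp_pos (-a), Real.exp_pos (-b),
      mul_nonneg (mul_nonneg hp0.le hp1'.le) (sub_nonneg.2 h1)]
  have hconc : ConcaveOn ℝ (Set.Ioi (0 : ℝ)) (fun C => Δ C q p) := by
    apply AntitoneOn.concaveOn_of_deriv (convex_Ioi 0)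
    · exact fun x _ => (hderiv x).continuousAt.continuousWithinAt
    · exact fun x _ => (hderiv x).differentiableAt.differentiableWithinAt
    · intro a _ b _ hab
      rw [(hderiv a).deriv, (hderiv b).deriv]
      exact hdle a b hab
  refine ⟨hconc, fun hq hqp' => ?_⟩
  set C₀ : ℝ := Real.log (p * (1 - q) / (q * (1 - p))) with hC₀
  have hA : 0 < p * (1 - q) / (q * (1 - p)) := by positivity
  have hexp : Real.exp (-C₀) = q * (1 - p) / (p * (1 - q)) := by
    rw [hC₀, Real.exp_neg, Real.exp_log hA]
    rw [inv_div]
  have hgval : 1 - p * (1 - Real.exp (-C₀)) = (1 - p) / (1 - q) := by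
    rw [hexp]
    field_simp
    ring
  have hd0 : d C₀ = 0 := by
    have h1 : p * Real.exp (-C₀) = q * (1 - p) / (1 - q) := by
      rw [hexp]
      field_simp [ne_of_gt hp0, ne_of_gt hq1']
    simp only [hd]
    rw [hgval, h1, sub_eq_zero,
      div_eq_iff (ne_of_gt (by positivity : (0:ℝ) < (1 - p) / (1 - q)))]
    exact mul_div_assoc q (1 - p) (1 - q)
  constructor
  · -- IsMaxOn
    have hmono : MonotoneOn (fun C => Δ C q p) (Set.Iic C₀) := by
      apply monotoneOn_of_deriv_nonneg (convex_Iic C₀)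
      · exact fun x _ => (hderiv x).continuousAt.continuousWithinAt
      · exact fun x _ => (hderiv x).differentiableAt.differentiableWithinAt
      · intro x hx
        rw [interior_Iic] at hx
        rw [(hderiv x).deriv]
        have := hdle x C₀ (le_of_lt hx)
        linarith [hd0 ▸ this]
    have hanti : AntitoneOn (fun C => Δ C q p) (Set.Ici C₀) := by
      apply antitoneOn_of_deriv_nonpos (convex_Ici C₀)
      · exact fun x _ => (hderiv x).continuousAt.continuousWithinAt
      · exact fun x _ => (hderiv x).differentiableAt.differentiableWithinAt
      · intro x hx
        rw [interior_Ici] at hx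
        rw [(hderiv x).deriv]
        have := hdle C₀ x (le_of_lt hx)
        linarith [hd0 ▸ this]
    intro x _
    rcases le_total x C₀ with h | h
    · exact hmono (Set.mem_Iic.2 h) (Set.mem_Iic.2 le_rfl) h
    · exact hanti (Set.mem_Ici.2 le_rfl) (Set.mem_Ici.2 h) h
  · -- value
    have hqne : q ≠ 0 := ne_of_gt hq
    have hpne : p ≠ 0 := ne_of_gt hp0
    have h1q : (1 : ℝ) - q ≠ 0 := ne_of_gt hq1'
    have h1p : (1 : ℝ) - p ≠ 0 := ne_of_gt hp1'
    show -Real.log (1 - p * (1 - Real.exp (-C₀))) - C₀ * q = klBin q p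
    rw [hgval, klBin, hC₀, Real.log_div h1p h1q,
      Real.log_div (mul_ne_zero hpne h1q) (mul_ne_zero hqne h1p),
      Real.log_mul hpne h1q, Real.log_mul hqne h1p,
      Real.log_div hqne hpne, Real.log_div h1q h1p]
    ring
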